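/- Let a_1, ..., a_n be real numbers with |a_i| ≥ 1 for all i, and let S be an open interval of length 1 in ℝ. Then the number of the 2^n sums ∑_{i∈I} a_i, I ⊆ [n], lying in S is at most C(n, ⌊n/2⌋). -/

import Mathlib

open Finset

lemma antichain_of_sum_mem (n : ℕ) (b : Fin n → ℝ) (hb : ∀ i, 1 ≤ b i) (y : ℝ) :
    IsAntichain (· ⊆ ·)
      (((Finset.univ : Finset (Finset (Fin n))).filter
        (fun J => (∑ i ∈ J, b i) ∈ Set.Ioo y (y + 1)) : Finset (Finset (Fin n))) :
          Set (Finset (Fin n))) := by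
  intro J hJ K hK hne hsub
  simp only [coe_filter, Set.mem_setOf_eq, Set.mem_Ioo] at hJ hK
  have hdiff : (∑ i ∈ K, b i) - ∑ i ∈ J, b i = ∑ i ∈ K \ J, b i := by
    rw [← Finset.sum_sdiff hsub]; ring
  have hne' : (K \ J).Nonempty := by
    rw [Finset.sdiff_nonempty]; exact fun h => hne (le_antisymm hsub h)
  obtain ⟨i, hi⟩ := hne'
  have h1 : (1 : ℝ) ≤ ∑ i ∈ K \ J, b i := by
    calc (1 : ℝ) ≤ b i := hb i
    _ ≤ ∑ i ∈ K \ J, b i :=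
      Finset.single_le_sum (fun j _ => le_trans zero_le_one (hb j)) hi
  have : (∑ i ∈ K, b i) - ∑ i ∈ J, b i < 1 := by
    have := hK.2.2; have := hJ.2.1; linarith
  linarith [hdiff ▸ this]

theorem erdos_littlewood_offord (n : ℕ) (a : Fin n → ℝ) (ha : ∀ i, 1 ≤ |a i|)
    (x : ℝ) :
    ((Finset.univ : Finset (Finset (Fin n))).filter
        (fun I => (∑ i ∈ I, a i) ∈ Set.Ioo x (x + 1))).card ≤ n.choose (n / 2) := by
  classical
  set b : Fin n → ℝ := fun i => |a i| with hb_def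
  have hb : ∀ i, 1 ≤ b i := ha
  set P : Finset (Fin n) := Finset.univ.filter (fun i => a i < 0) with hP_def
  set c : ℝ := ∑ i ∈ P, b i with hc_def
  -- key identity
  have key : ∀ I : Finset (Fin n), (∑ i ∈ symmDiff I P, b i) = (∑ i ∈ I, a i) + c := by
    intro I
    have hsd : symmDiff I P = (I \ P) ∪ (P \ I) := by
      rw [symmDiff_def]; rfl
    have hdisj : Disjoint (I \ P) (P \ I) := by
      exact disjoint_sdiff_sdiff
    have e1 : ∑ i ∈ I \ P, b i = ∑ i ∈ I \ P, a i := by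
      refine Finset.sum_congr rfl fun i hi => ?_
      have : ¬ a i < 0 := by
        intro h; exact (Finset.mem_sdiff.mp hi).2 (by simp [hP_def, h])
      simp [hb_def, abs_of_nonneg (not_lt.mp this)]
    have e2 : ∀ i ∈ P, b i = -a i := by
      intro i hi
      have : a i < 0 := by simpa [hP_def] using hi
      simp [hb_def, abs_of_neg this]
    have eI : ∑ i ∈ I, a i = ∑ i ∈ I \ P, a i + ∑ i ∈ I ∩ P, a i := by
      rw [← Finset.sum_union (Finset.sdiff_disjoint.mono_right Finset.inter_subset_right),
        Finset.sdiff_union_inter]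
    have eP : c = ∑ i ∈ P \ I, b i + ∑ i ∈ P ∩ I, b i := by
      rw [hc_def, ← Finset.sum_union (Finset.sdiff_disjoint.mono_right Finset.inter_subset_right),
        Finset.sdiff_union_inter]
    have eIP : ∑ i ∈ P ∩ I, b i = ∑ i ∈ I ∩ P, (- a i) := by
      rw [Finset.inter_comm]
      exact Finset.sum_congr rfl fun i hi => e2 i (Finset.mem_inter.mp hi).2
    rw [hsd, Finset.sum_union hdisj, e1]
    rw [eI, eP, eIP, Finset.sum_neg_distrib]
    ring
  -- injection I ↦ symmDiff I P
  have hinj : ((Finset.univ : Finset (Finset (Fin n))).filter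
        (fun I => (∑ i ∈ I, a i) ∈ Set.Ioo x (x + 1))).card ≤
      ((Finset.univ : Finset (Finset (Fin n))).filter
        (fun J => (∑ i ∈ J, b i) ∈ Set.Ioo (x + c) (x + c + 1))).card := by
    apply Finset.card_le_card_of_injOn (fun I => symmDiff I P)
    · intro I hI
      simp only [Finset.mem_coe, Finset.mem_filter, Finset.mem_univ, true_and, Set.mem_Ioo] at hI ⊢
      rw [key I]
      constructor <;> linarith [hI.1, hI.2]
    · intro I _ J _ h
      have := congrArg (fun S => symmDiff S P) h
      simpa [symmDiff_symmDiff_cancel_right] using this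
  refine hinj.trans ?_
  have := IsAntichain.sperner (antichain_of_sum_mem n b hb (x + c))
  simpa using this
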